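/- Combining Γ*(θ) ≥ 1/(4H(θ)) with the finite-time regret lower bound R(T) ≥ (1/(6k))·exp(−200T/((log k)·H(θ)) + 2√(T log(6Tk))): any algorithm satisfies, on at least one of the k hard instances, limsup_{T→∞} −(1/T)·log R(T) ≤ (800/log k)·Γ*(θ). -/
import Mathlib


open Filter

/-- Combining `Γ*(θ) ≥ 1/(4H(θ))` with the finite-time lower bound
`R(T) ≥ (1/(6k)) exp(−200T/((log k) H(θ)) + 2√(T log(6Tk)))`, the regret exponent on the hard
instance satisfies `limsup_T −(1/T) log R(T) ≤ (800/log k) Γ*(θ)`. -/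
theorem carpentier_locatelli_contradicts_oracle_rate
    (R : ℕ → ℝ) (Γstar H : ℝ) (k : ℕ) (hk : 2 ≤ k) (hH : 0 < H)
    (hΓ : 1 / (4 * H) ≤ Γstar)
    (hlb : ∀ T : ℕ, 1 ≤ T →
      (1 / (6 * (k : ℝ))) *
        Real.exp (-(200 * T) / (Real.log k * H) + 2 * Real.sqrt ((T : ℝ) * Real.log (6 * T * k)))
        ≤ R T) :
    Filter.limsup (fun T : ℕ => -(1 / (T : ℝ)) * Real.log (R T)) atTop
      ≤ (800 / Real.log k) * Γstar := by
  have hk1 : (1:ℝ) < (k:ℝ) := by exact_mod_cast lt_of_lt_of_le one_lt_two hk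
  have hc : 0 < Real.log k := Real.log_pos hk1
  have hcH : 0 < Real.log k * H := mul_pos hc hH
  set L : ℝ := 200 / (Real.log k * H) with hL
  have hk0 : (0:ℝ) < (6 * (k:ℝ)) := by positivity
  have hlog6k : 0 ≤ Real.log (6 * (k:ℝ)) := by
    apply Real.log_nonneg; nlinarith
  -- key pointwise bound
  have key : ∀ T : ℕ, 1 ≤ T →
      -(1 / (T : ℝ)) * Real.log (R T) ≤ L + Real.log (6 * (k:ℝ)) / T := by
    intro T hT
    have hT0 : (0:ℝ) < T := by exact_mod_cast hT
    set E : ℝ := -(200 * T) / (Real.log k * H) +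
        2 * Real.sqrt ((T : ℝ) * Real.log (6 * T * k)) with hE
    have hpos : 0 < (1 / (6 * (k : ℝ))) * Real.exp E := by positivity
    have h1 : Real.log ((1 / (6 * (k : ℝ))) * Real.exp E) ≤ Real.log (R T) :=
      Real.log_le_log hpos (hlb T hT)
    have h2 : Real.log ((1 / (6 * (k : ℝ))) * Real.exp E)
        = -Real.log (6 * (k:ℝ)) + E := by
      rw [Real.log_mul (by positivity) (Real.exp_ne_zero _), Real.log_exp,
        one_div, Real.log_inv]
    have h3 : -(1 / (T : ℝ)) * Real.log (R T)
        ≤ -(1 / (T : ℝ)) * (-Real.log (6 * (k:ℝ)) + E) := by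
      rw [← h2]
      exact mul_le_mul_of_nonpos_left h1 (neg_nonpos_of_nonneg (by positivity))
    refine h3.trans ?_
    set S : ℝ := Real.sqrt ((T : ℝ) * Real.log (6 * T * k)) with hS
    have hS0 : 0 ≤ S := Real.sqrt_nonneg _
    have heq : -(1 / (T : ℝ)) * (-Real.log (6 * (k:ℝ)) + E)
        = L + Real.log (6 * (k:ℝ)) / T - (2 * S) / T := by
      rw [hE, hL]
      field_simp
      ring
    rw [heq]
    have : 0 ≤ (2 * S) / T := by positivity
    linarith
  by_cases hcob : IsCoboundedUnder (· ≤ ·) atTop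
      (fun T : ℕ => -(1 / (T : ℝ)) * Real.log (R T))
  swap
  · -- degenerate case: no eventual lower bound structure, limsup is junk value 0
    have hnb : ¬ BddBelow {a : ℝ | ∀ᶠ T : ℕ in atTop, -(1 / (T : ℝ)) * Real.log (R T) ≤ a} := by
      rintro ⟨b, hb⟩
      exact hcob ⟨b, fun a ha => hb (eventually_map.mp ha)⟩
    have hset : {a : ℝ | ∀ᶠ n in map (fun T : ℕ => -(1 / (T : ℝ)) * Real.log (R T)) atTop, n ≤ a}
        = {a : ℝ | ∀ᶠ T : ℕ in atTop, -(1 / (T : ℝ)) * Real.log (R T) ≤ a} := by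
      ext a; exact eventually_map
    rw [limsup, limsSup, hset, Real.sInf_of_not_bddBelow hnb]
    have h800 : 0 < 800 / Real.log k := by positivity
    have hΓ0 : 0 ≤ Γstar := le_trans (by positivity) hΓ
    positivity
  have hlimsup : Filter.limsup (fun T : ℕ => -(1 / (T : ℝ)) * Real.log (R T)) atTop ≤ L := by
    refine le_of_forall_pos_le_add ?_
    intro ε hε
    refine limsup_le_of_le hcob ?_
    have htend : Tendsto (fun T : ℕ => Real.log (6 * (k:ℝ)) / T) atTop (nhds 0) :=
      tendsto_const_div_atTop_nhds_zero_nat _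
    filter_upwards [eventually_ge_atTop 1, htend.eventually_lt_const hε] with T hT hlt
    exact (key T hT).trans (by linarith)
  refine hlimsup.trans ?_
  have h800 : 0 < 800 / Real.log k := by positivity
  have : L = (800 / Real.log k) * (1 / (4 * H)) := by
    rw [hL]; field_simp; ring
  rw [this]
  exact mul_le_mul_of_nonneg_left hΓ h800.le
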